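/- Let K be an infinite compact Hausdorff space such that every bounded linear operator on C(K) is a weak multiplication, and let L = K × Bool (Bool discrete), with J : C(L) → C(L) the swap operator (Jf)(x,b) = f(x,¬b). Then J is not a weak multiplier, and every bounded linear operator T on C(L) can be written as T = g·J + W, where g ∈ C(L) (g·J denotes the operator f ↦ g·(Jf)) and W is a weak multiplication on C(L). -/

import Mathlib

open Filter Topology

/-- A bounded linear operator `T` on `C(K, ℝ)` is a *weak multiplier* if for every bounded
pairwise disjoint sequence `(e_n)` in `C(K, ℝ)` and every sequence `(x_n)` in `K` with
`e_n (x_n) = 0` for all `n`, one has `T (e_n) (x_n) → 0`. -/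
def IsWeakMultiplier {K : Type*} [TopologicalSpace K] [CompactSpace K]
    (T : C(K, ℝ) →L[ℝ] C(K, ℝ)) : Prop :=
  ∀ (e : ℕ → C(K, ℝ)) (x : ℕ → K),
    (∃ M : ℝ, ∀ n, ‖e n‖ ≤ M) →
    (∀ i j, i ≠ j → e i * e j = 0) →
    (∀ n, (e n) (x n) = 0) →
    Filter.Tendsto (fun n => (T (e n)) (x n)) Filter.atTop (nhds 0)

/-- An operator on `C(K, ℝ)` is *weakly compact* if the image of the closed unit ball has
compact closure in the weak topology. -/
def IsWeaklyCompactOp {K : Type*} [TopologicalSpace K] [CompactSpace K]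
    (S : C(K, ℝ) →L[ℝ] C(K, ℝ)) : Prop :=
  IsCompact (closure ((toWeakSpace ℝ C(K, ℝ)) '' (S '' Metric.closedBall 0 1)))

/-- An operator on `C(K, ℝ)` is a *weak multiplication* if it has the form `g•I + S` with
`g ∈ C(K, ℝ)` and `S` weakly compact. -/
def IsWeakMultiplication {K : Type*} [TopologicalSpace K] [CompactSpace K]
    (T : C(K, ℝ) →L[ℝ] C(K, ℝ)) : Prop :=
  ∃ (g : C(K, ℝ)) (S : C(K, ℝ) →L[ℝ] C(K, ℝ)),
    IsWeaklyCompactOp S ∧ T = ContinuousLinearMap.mul ℝ C(K, ℝ) g + S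

/-- A subset `A` of a real vector space is *lineable* if `A ∪ {0}` contains an
infinite-dimensional subspace. -/
def Lineable {X : Type*} [AddCommGroup X] [Module ℝ X] (A : Set X) : Prop :=
  ∃ W : Submodule ℝ X, ¬ FiniteDimensional ℝ W ∧ (W : Set X) ⊆ A ∪ {0}

/-- A subset `A` of a real normed space is *spaceable* if `A ∪ {0}` contains a closed
infinite-dimensional subspace. -/
def Spaceable {X : Type*} [NormedAddCommGroup X] [NormedSpace ℝ X] (A : Set X) : Prop :=
  ∃ W : Submodule ℝ X, IsClosed (W : Set X) ∧ ¬ FiniteDimensional ℝ W ∧ (W : Set X) ⊆ A ∪ {0}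

/-- The swap operator `J` on `C(K × Bool, ℝ)`, `(J f)(x, b) = f (x, ¬b)`. -/
noncomputable def swapOp (K : Type*) [TopologicalSpace K] [CompactSpace K] :
    C(K × Bool, ℝ) →L[ℝ] C(K × Bool, ℝ) :=
  LinearMap.mkContinuous
    { toFun := fun f => f.comp
        ⟨fun p => (p.1, !p.2),
          continuous_fst.prodMk ((continuous_of_discreteTopology (f := fun b : Bool => !b)).comp continuous_snd)⟩
      map_add' := fun f g => rfl
      map_smul' := fun c f => rfl }
    1
    (fun f => by
      rw [one_mul]
      exact (ContinuousMap.norm_le _ (norm_nonneg f)).mpr fun p => f.norm_coe_le_norm _)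

@[simp] theorem swapOp_apply {K : Type*} [TopologicalSpace K] [CompactSpace K]
    (f : C(K × Bool, ℝ)) (p : K × Bool) : swapOp K f p = f (p.1, !p.2) := rfl

/-- The restriction operator `π_i : C(K × Bool, ℝ) → C(K, ℝ)`, `π_i(f)(x) = f (x, i)`. -/
noncomputable def piOp (K : Type*) [TopologicalSpace K] [CompactSpace K] (i : Bool) :
    C(K × Bool, ℝ) →L[ℝ] C(K, ℝ) :=
  LinearMap.mkContinuous
    { toFun := fun f => f.comp ⟨fun x => (x, i), continuous_id.prodMk continuous_const⟩
      map_add' := fun f g => rfl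
      map_smul' := fun c f => rfl }
    1
    (fun f => by
      rw [one_mul]
      exact (ContinuousMap.norm_le _ (norm_nonneg f)).mpr fun x => f.norm_coe_le_norm _)

@[simp] theorem piOp_apply {K : Type*} [TopologicalSpace K] [CompactSpace K] (i : Bool)
    (f : C(K × Bool, ℝ)) (x : K) : piOp K i f x = f (x, i) := rfl

/-- The extension operator `σ_i : C(K, ℝ) → C(K × Bool, ℝ)`, `σ_i(g)(x, b) = g x` if `b = i`
and `0` otherwise. -/
noncomputable def sigmaOp (K : Type*) [TopologicalSpace K] [CompactSpace K] (i : Bool) :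
    C(K, ℝ) →L[ℝ] C(K × Bool, ℝ) :=
  LinearMap.mkContinuous
    { toFun := fun g =>
        ⟨fun p => if p.2 = i then g p.1 else 0, by
          have : (fun p : K × Bool => if p.2 = i then g p.1 else 0)
              = fun p : K × Bool => (if p.2 = i then (1 : ℝ) else 0) * g p.1 := by
            funext p
            by_cases h : p.2 = i <;> simp [h]
          rw [this]
          exact (((continuous_of_discreteTopology
              (f := fun b : Bool => if b = i then (1 : ℝ) else 0)).comp
            continuous_snd).mul (g.continuous.comp continuous_fst))⟩
      map_add' := fun f g => by
        ext p
        by_cases h : p.2 = i <;> simp [h]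
      map_smul' := fun c f => by
        ext p
        by_cases h : p.2 = i <;> simp [h] }
    1
    (fun g => by
      rw [one_mul]
      refine (ContinuousMap.norm_le _ (norm_nonneg g)).mpr fun p => ?_
      simp only [ContinuousMap.coe_mk, LinearMap.coe_mk, AddHom.coe_mk]
      by_cases h : p.2 = i
      · simpa [h] using g.norm_coe_le_norm p.1
      · simp [h])

@[simp] theorem sigmaOp_apply {K : Type*} [TopologicalSpace K] [CompactSpace K] (i : Bool)
    (g : C(K, ℝ)) (p : K × Bool) : sigmaOp K i g p = if p.2 = i then g p.1 else 0 := rfl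


section WeakCompact

variable {D E F G : Type*} [NormedAddCommGroup D] [NormedSpace ℝ D]
  [NormedAddCommGroup E] [NormedSpace ℝ E]
  [NormedAddCommGroup F] [NormedSpace ℝ F]
  [NormedAddCommGroup G] [NormedSpace ℝ G]

noncomputable instance (priority := 100) WeakSpace.instContinuousSMulAux :
    ContinuousSMul ℝ (WeakSpace ℝ E) :=
  inferInstanceAs (ContinuousSMul ℝ (WeakBilin (topDualPairing ℝ E).flip))

instance (priority := 100) WeakSpace.instT2SpaceAux : T2Space (WeakSpace ℝ E) := by
  refine (WeakBilin.isEmbedding (B := (topDualPairing ℝ E).flip) ?_).t2Space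
  intro x y h
  by_contra hxy
  obtain ⟨v, hv⟩ := SeparatingDual.exists_separating_of_ne (R := ℝ) hxy
  have : (topDualPairing ℝ E).flip x v = (topDualPairing ℝ E).flip y v := by rw [h]
  exact hv (by simpa [topDualPairing] using this)

/-- General weak compactness of an operator between normed spaces. -/
def WCompact (S : E →L[ℝ] F) : Prop :=
  IsCompact (closure ((toWeakSpace ℝ F) '' (S '' Metric.closedBall 0 1)))

lemma wc_of_subset_compact {X Y : Set (WeakSpace ℝ F)} (hY : IsCompact Y) (hXY : X ⊆ Y) :
    IsCompact (closure X) :=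
  hY.of_isClosed_subset isClosed_closure (closure_minimal hXY hY.isClosed)

lemma WCompact.add {S S' : E →L[ℝ] F} (hS : WCompact S) (hS' : WCompact S') :
    WCompact (S + S') := by
  refine wc_of_subset_compact (IsCompact.add hS hS') ?_
  rintro _ ⟨_, ⟨f, hf, rfl⟩, rfl⟩
  exact Set.add_mem_add
    (subset_closure ⟨S f, ⟨f, hf, rfl⟩, rfl⟩)
    (subset_closure ⟨S' f, ⟨f, hf, rfl⟩, rfl⟩)

lemma WCompact.comp_left (A : F →L[ℝ] G) {S : E →L[ℝ] F} (hS : WCompact S) :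
    WCompact (A.comp S) := by
  refine wc_of_subset_compact (hS.image (WeakSpace.map A).continuous) ?_
  rintro _ ⟨_, ⟨f, hf, rfl⟩, rfl⟩
  exact ⟨toWeakSpace ℝ F (S f), subset_closure ⟨S f, ⟨f, hf, rfl⟩, rfl⟩, rfl⟩

lemma WCompact.comp_right {S : E →L[ℝ] F} (hS : WCompact S) (A : D →L[ℝ] E) :
    WCompact (S.comp A) := by
  set c : ℝ := ‖A‖ + 1 with hc
  have hc0 : (0 : ℝ) < c := by positivity
  refine wc_of_subset_compact (hS.image (continuous_const_smul c)) ?_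
  rintro _ ⟨_, ⟨f, hf, rfl⟩, rfl⟩
  have hf1 : ‖f‖ ≤ 1 := by simpa using Metric.mem_closedBall.mp hf
  have hAf : ‖c⁻¹ • A f‖ ≤ 1 := by
    rw [norm_smul, norm_inv, Real.norm_of_nonneg hc0.le]
    calc c⁻¹ * ‖A f‖ ≤ c⁻¹ * c := by
          refine mul_le_mul_of_nonneg_left ?_ (by positivity)
          calc ‖A f‖ ≤ ‖A‖ * ‖f‖ := A.le_opNorm f
            _ ≤ ‖A‖ * 1 := by nlinarith [norm_nonneg A]
            _ ≤ c := by simp [hc]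
      _ = 1 := inv_mul_cancel₀ hc0.ne'
  refine ⟨toWeakSpace ℝ F (S (c⁻¹ • A f)),
    subset_closure ⟨S (c⁻¹ • A f), ⟨c⁻¹ • A f, by simpa using hAf, rfl⟩, rfl⟩, ?_⟩
  show c • (toWeakSpace ℝ F (S (c⁻¹ • A f))) = toWeakSpace ℝ F (S (A f))
  rw [← map_smul, ← map_smul, smul_inv_smul₀ hc0.ne']

end WeakCompact

section Disj
variable {K : Type*} [TopologicalSpace K] [T2Space K]

lemma step_disjoint {X : Set K} (hX : X.Infinite) (hXo : IsOpen X) :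
    ∃ p : Set K × Set K, IsOpen p.1 ∧ p.1.Nonempty ∧ IsOpen p.2 ∧ p.2.Infinite ∧
      Disjoint p.1 p.2 ∧ p.1 ⊆ X ∧ p.2 ⊆ X := by
  obtain ⟨x, hx, y, hy, hxy⟩ := hX.nontrivial
  obtain ⟨A, B, hA, hB, hxA, hyB, hAB⟩ := t2_separation hxy
  by_cases h : (A ∩ X).Infinite
  · exact ⟨(B ∩ X, A ∩ X), hB.inter hXo, ⟨y, hyB, hy⟩, hA.inter hXo, h,
      (hAB.symm.mono Set.inter_subset_left Set.inter_subset_left), Set.inter_subset_right,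
      Set.inter_subset_right⟩
  · rw [Set.not_infinite] at h
    have hxAX : x ∈ A ∩ X := ⟨hxA, hx⟩
    have hsub : IsClosed ((A ∩ X) \ {x}) := h.diff.isClosed
    have hxo : IsOpen ({x} : Set K) := by
      have : ({x} : Set K) = (A ∩ X) ∩ ((A ∩ X) \ {x})ᶜ := by
        ext z
        simp only [Set.mem_singleton_iff, Set.mem_inter_iff, Set.mem_compl_iff, Set.mem_diff,
          not_and, not_not]
        constructor
        · rintro rfl; exact ⟨hxAX, fun _ => rfl⟩
        · rintro ⟨hz, hz2⟩; exact hz2 hz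
      rw [this]
      exact (hA.inter hXo).inter hsub.isOpen_compl
    exact ⟨({x}, X \ {x}), hxo, ⟨x, rfl⟩, hXo.sdiff isClosed_singleton,
      hX.diff (Set.finite_singleton x), Set.disjoint_sdiff_right, by simpa using hx,
      Set.diff_subset⟩

lemma exists_disjoint_opens [Infinite K] :
    ∃ U : ℕ → Set K, (∀ n, IsOpen (U n)) ∧ (∀ n, (U n).Nonempty) ∧
      ∀ i j, i ≠ j → Disjoint (U i) (U j) := by
  have step : ∀ X : {X : Set K // X.Infinite ∧ IsOpen X},
      ∃ p : Set K × Set K, IsOpen p.1 ∧ p.1.Nonempty ∧ IsOpen p.2 ∧ p.2.Infinite ∧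
        Disjoint p.1 p.2 ∧ p.1 ⊆ X.1 ∧ p.2 ⊆ X.1 := fun X => step_disjoint X.2.1 X.2.2
  choose F h1 h2 h3 h4 h5 h6 h7 using step
  let V : ℕ → {X : Set K // X.Infinite ∧ IsOpen X} := fun n =>
    Nat.rec ⟨Set.univ, Set.infinite_univ, isOpen_univ⟩ (fun _ p => ⟨(F p).2, h4 p, h3 p⟩) n
  have hVsucc : ∀ n, (V (n + 1)).1 = (F (V n)).2 := fun n => rfl
  have key : ∀ i j, i < j → (V j).1 ⊆ (F (V i)).2 := by
    intro i j hij
    induction j with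
    | zero => omega
    | succ j ih =>
      rcases Nat.lt_succ_iff_lt_or_eq.mp hij with h | h
      · rw [hVsucc j]
        exact (h7 (V j)).trans (ih h)
      · subst h
        rw [hVsucc i]
  have hdisj : ∀ i j, i < j → Disjoint ((F (V i)).1) ((F (V j)).1) := by
    intro i j hij
    exact (h5 (V i)).mono_right ((h6 (V j)).trans (key i j hij))
  refine ⟨fun n => (F (V n)).1, fun n => h1 _, fun n => h2 _, fun i j hij => ?_⟩
  rcases hij.lt_or_gt with h | h
  · exact hdisj i j h
  · exact (hdisj j i h).symm
end Disj
/-- If every operator on `C(K, ℝ)` is a weak multiplication (`K` infinite compact Hausdorff),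
then the swap operator `J` on `C(K × Bool, ℝ)` is not a weak multiplier, and every operator `T`
on `C(K × Bool, ℝ)` has the form `g·J + W` with `g ∈ C(K × Bool, ℝ)` and `W` a weak
multiplication. -/
theorem swapOp_not_weakMultiplier_and_decomposition
    {K : Type*} [TopologicalSpace K] [CompactSpace K] [T2Space K] [Infinite K]
    (hfew : ∀ S : C(K, ℝ) →L[ℝ] C(K, ℝ), IsWeakMultiplication S) :
    ¬ IsWeakMultiplier (swapOp K) ∧
      ∀ T : C(K × Bool, ℝ) →L[ℝ] C(K × Bool, ℝ),
        ∃ (g : C(K × Bool, ℝ)) (W : C(K × Bool, ℝ) →L[ℝ] C(K × Bool, ℝ)),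
          IsWeakMultiplication W ∧
          T = (ContinuousLinearMap.mul ℝ C(K × Bool, ℝ) g).comp (swapOp K) + W := by
  constructor
  · -- J is not a weak multiplier
    obtain ⟨U, hUo, hUne, hUd⟩ := exists_disjoint_opens (K := K)
    choose y hy using hUne
    have urysohn : ∀ n, ∃ f : C(K, ℝ), Set.EqOn f 0 (U n)ᶜ ∧ Set.EqOn f 1 {y n} ∧
        ∀ x, f x ∈ Set.Icc (0 : ℝ) 1 := fun n =>
      exists_continuous_zero_one_of_isClosed (hUo n).isClosed_compl isClosed_singleton
        (by simp [Set.disjoint_singleton_right, hy n])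
    choose f hf0 hf1 hf01 using urysohn
    intro hwm
    have hzero : ∀ i x, x ∉ U i → f i x = 0 := fun i x hx => hf0 i hx
    have key := hwm (fun n => sigmaOp K false (f n)) (fun n => (y n, true))
      ⟨1, fun n => by
        refine (ContinuousMap.norm_le _ zero_le_one).mpr fun p => ?_
        by_cases h : p.2 = false
        · simp only [sigmaOp_apply, h, if_true]
          have := hf01 n p.1
          rw [Set.mem_Icc] at this
          rw [Real.norm_eq_abs, abs_le]
          constructor <;> linarith [this.1, this.2]
        · simp [sigmaOp_apply, h]⟩
      (fun i j hij => by
        ext p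
        simp only [ContinuousMap.mul_apply, sigmaOp_apply, ContinuousMap.zero_apply]
        by_cases h : p.2 = false
        · simp only [h, if_true]
          by_cases hx : p.1 ∈ U i
          · have : p.1 ∉ U j := fun hj => (hUd i j hij).ne_of_mem hx hj rfl
            rw [hzero j p.1 this, mul_zero]
          · rw [hzero i p.1 hx, zero_mul]
        · simp [h])
      (fun n => by simp)
    have hone : ∀ n, swapOp K ((fun n => sigmaOp K false (f n)) n) ((fun n => (y n, true)) n)
        = 1 := by
      intro n
      simp only [swapOp_apply, sigmaOp_apply]
      simpa using hf1 n rfl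
    simp only [hone] at key
    exact one_ne_zero (tendsto_nhds_unique tendsto_const_nhds key)
  · -- decomposition
    intro T
    have h := fun (i j : Bool) => hfew (((piOp K i).comp T).comp (sigmaOp K j))
    choose g S hS hEq using h
    set G : C(K × Bool, ℝ) := sigmaOp K true (g true false) + sigmaOp K false (g false true)
      with hG
    set H : C(K × Bool, ℝ) := sigmaOp K true (g true true) + sigmaOp K false (g false false)
      with hH
    set Stot : C(K × Bool, ℝ) →L[ℝ] C(K × Bool, ℝ) :=
      (((sigmaOp K true).comp (S true true)).comp (piOp K true)) +
      (((sigmaOp K true).comp (S true false)).comp (piOp K false)) +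
      (((sigmaOp K false).comp (S false true)).comp (piOp K true)) +
      (((sigmaOp K false).comp (S false false)).comp (piOp K false)) with hStot
    have wc : ∀ i j : Bool, WCompact (((sigmaOp K i).comp (S i j)).comp (piOp K j)) :=
      fun i j => WCompact.comp_right (WCompact.comp_left (sigmaOp K i) (hS i j)) (piOp K j)
    refine ⟨G, ContinuousLinearMap.mul ℝ _ H + Stot,
      ⟨H, Stot, WCompact.add (WCompact.add (WCompact.add (wc true true) (wc true false))
        (wc false true)) (wc false false), rfl⟩, ?_⟩
    ext φ : 1
    refine ContinuousMap.ext fun p => ?_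
    obtain ⟨x, b⟩ := p
    have hφ : φ = sigmaOp K true (piOp K true φ) + sigmaOp K false (piOp K false φ) := by
      ext q
      obtain ⟨z, c⟩ := q
      cases c <;> simp
    have key : ∀ (i j : Bool) (h : C(K, ℝ)) (x : K),
        T (sigmaOp K j h) (x, i) = g i j x * h x + S i j h x := by
      intro i j h x
      have h1 := ContinuousMap.congr_fun (DFunLike.congr_fun (hEq i j) h) x
      simpa using h1
    have hT : T φ = T (sigmaOp K true (piOp K true φ)) + T (sigmaOp K false (piOp K false φ)) := by
      conv_lhs => rw [hφ]
      rw [map_add]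
    rw [hT]
    cases b <;>
      simp only [ContinuousMap.add_apply, key, ContinuousLinearMap.add_apply,
        ContinuousLinearMap.comp_apply, ContinuousLinearMap.mul_apply', ContinuousMap.mul_apply,
        swapOp_apply, sigmaOp_apply, piOp_apply, hG, hH, hStot, Bool.not_false, Bool.not_true,
        if_true, if_false, Bool.true_eq_false, Bool.false_eq_true] <;>
      ring
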